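/- Let P be an n×n orthogonal projection and X Hermitian with X = XP + PX. Then |XP − PX|² = |XP + PX|² = |X|², and consequently XP − PX and X have the same singular values (hence the same value under any unitarily invariant norm). -/

import Mathlib

open Matrix
open scoped ComplexOrder

noncomputable section

/-- The positive semidefinite square root, as defined in the older Mathlib
(`Matrix.PosSemidef.sqrt`, removed since). -/
noncomputable def Matrix.PosSemidef.sqrt {m : Type*} [Fintype m] [DecidableEq m] {𝕜 : Type*}
    [RCLike 𝕜] {A : Matrix m m 𝕜} (hA : A.PosSemidef) : Matrix m m 𝕜 :=
  hA.1.eigenvectorUnitary.1 * diagonal ((↑) ∘ (√·) ∘ hA.1.eigenvalues) *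
    (star hA.1.eigenvectorUnitary : Matrix m m 𝕜)

theorem Matrix.PosSemidef.posSemidef_sqrt {m : Type*} [Fintype m] [DecidableEq m] {𝕜 : Type*}
    [RCLike 𝕜] {A : Matrix m m 𝕜} (hA : A.PosSemidef) : PosSemidef hA.sqrt := by
  unfold Matrix.PosSemidef.sqrt
  have hd : PosSemidef (diagonal (((↑) ∘ (√·) ∘ hA.1.eigenvalues) : m → 𝕜)) := by
    refine PosSemidef.diagonal fun i => ?_
    simp only [Function.comp_apply, Pi.zero_apply]
    exact_mod_cast Real.sqrt_nonneg _
  have := hd.mul_mul_conjTranspose_same (hA.1.eigenvectorUnitary.1)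
  simpa [Matrix.star_eq_conjTranspose] using this

theorem psd_sq_sqrt_aux {m : Type*} [Fintype m] [DecidableEq m] {𝕜 : Type*}
    [RCLike 𝕜] {A : Matrix m m 𝕜} (hA : A.PosSemidef) : hA.sqrt ^ 2 = A := by
  unfold Matrix.PosSemidef.sqrt
  set U := hA.1.eigenvectorUnitary
  set D := diagonal (((↑) ∘ (√·) ∘ hA.1.eigenvalues) : m → 𝕜)
  have hU : (star U : Matrix m m 𝕜) * U.1 = 1 := Unitary.coe_star_mul_self U
  have hD : D * D = diagonal (RCLike.ofReal ∘ hA.1.eigenvalues) := by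
    rw [diagonal_mul_diagonal]; congr 1; funext i
    simp only [Function.comp_apply]
    rw [← RCLike.ofReal_mul, Real.mul_self_sqrt (hA.eigenvalues_nonneg i)]
  conv_rhs => rw [hA.1.spectral_theorem, Unitary.conjStarAlgAut_apply]
  rw [sq, ← hD]
  calc U.1 * D * (star U : Matrix m m 𝕜) * (U.1 * D * (star U : Matrix m m 𝕜))
      = U.1 * D * ((star U : Matrix m m 𝕜) * U.1) * D * (star U : Matrix m m 𝕜) := by
        simp only [mul_assoc]
    _ = U.1 * (D * D) * (star U : Matrix m m 𝕜) := by rw [hU, mul_one]; simp only [mul_assoc]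

/-- n×n complex matrices -/
abbrev Mat (n : ℕ) := Matrix (Fin n) (Fin n) ℂ

/-- modulus |A| = sqrt (Aᴴ A) -/
noncomputable def matAbs {n : ℕ} (A : Mat n) : Mat n :=
  (Matrix.posSemidef_conjTranspose_mul_self A).sqrt

/-- spectral (operator) norm -/
noncomputable def specNorm {n : ℕ} (A : Mat n) : ℝ :=
  ‖Matrix.toEuclideanCLM (𝕜 := ℂ) (n := Fin n) A‖

/-- Löwner order: `A ≤ B` iff `B - A` is positive semidefinite -/
def loewnerLE {n : ℕ} (A B : Mat n) : Prop := (B - A).PosSemidef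

/-- singular values of `A`, arranged in non-increasing order -/
noncomputable def sval {n : ℕ} (A : Mat n) : Fin n → ℝ :=
  fun i =>
    let e := ((Matrix.posSemidef_conjTranspose_mul_self A).posSemidef_sqrt).1.eigenvalues
    (e ∘ Tuple.sort e) i.rev

/-- singular values indexed by naturals (0 beyond the size) -/
noncomputable def svalNat {n : ℕ} (A : Mat n) (k : ℕ) : ℝ :=
  if h : k < n then sval A ⟨k, h⟩ else 0

/-- eigenvalues of a Hermitian matrix, arranged in non-increasing order -/
noncomputable def eigsDesc {n : ℕ} {A : Mat n} (hA : A.IsHermitian) : Fin n → ℝ :=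
  fun i => (hA.eigenvalues ∘ Tuple.sort hA.eigenvalues) i.rev

lemma matAbs_sq {n : ℕ} (A : Mat n) : matAbs A ^ 2 = Aᴴ * A :=
  psd_sq_sqrt_aux (Matrix.posSemidef_conjTranspose_mul_self A)

lemma sqrt_congr {n : ℕ} {M N : Mat n} (hM : M.PosSemidef) (hN : N.PosSemidef)
    (h : M = N) : hM.sqrt = hN.sqrt := by subst h; rfl

lemma eig_congr {n : ℕ} {M N : Mat n} (hM : M.IsHermitian) (hN : N.IsHermitian)
    (h : M = N) : hM.eigenvalues = hN.eigenvalues := by subst h; rfl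

lemma sval_congr {n : ℕ} {A B : Mat n} (h : Aᴴ * A = Bᴴ * B) : sval A = sval B := by
  have hs : (Matrix.posSemidef_conjTranspose_mul_self A).sqrt
      = (Matrix.posSemidef_conjTranspose_mul_self B).sqrt :=
    sqrt_congr _ _ h
  have he := eig_congr ((Matrix.posSemidef_conjTranspose_mul_self A).posSemidef_sqrt).1
    ((Matrix.posSemidef_conjTranspose_mul_self B).posSemidef_sqrt).1 hs
  unfold sval
  rw [he]

theorem stmt14 {n : ℕ} (P X : Mat n) (hP : P.IsHermitian) (hP2 : P * P = P)
    (hX : X.IsHermitian) (hcod : X = X * P + P * X) :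
    matAbs (X * P - P * X) ^ 2 = matAbs (X * P + P * X) ^ 2 ∧
    matAbs (X * P + P * X) ^ 2 = matAbs X ^ 2 ∧
    sval (X * P - P * X) = sval X := by
  have hPXP : P * X * P = 0 := by
    have h : X * P = (X * P + P * X) * P := by conv_lhs => rw [hcod]
    rw [add_mul, mul_assoc X P P, hP2] at h
    exact (left_eq_add.mp h)
  have la : P * (X * (P * X)) = 0 := by
    rw [← mul_assoc X P X, ← mul_assoc P (X * P) X, ← mul_assoc P X P, hPXP, zero_mul]
  have lb : X * (P * (X * P)) = 0 := by
    rw [← mul_assoc P X P, hPXP, mul_zero]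
  have lc : X * (P * (P * X)) = X * (P * X) := by
    rw [← mul_assoc P P X, hP2]
  have key : (X * P - P * X)ᴴ * (X * P - P * X) = Xᴴ * X := by
    have hC : (X * P - P * X)ᴴ = P * X - X * P := by
      simp [conjTranspose_sub, conjTranspose_mul, hX.eq, hP.eq]
    rw [hC, hX.eq]
    have hR : X * X = (X * P + P * X) * (X * P + P * X) := by rw [← hcod]
    rw [hR]
    simp only [mul_sub, sub_mul, mul_add, add_mul, mul_assoc]
    rw [la, lb, lc]
    abel
  have keyD : Xᴴ * X = (X * P + P * X)ᴴ * (X * P + P * X) := by rw [← hcod]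
  refine ⟨?_, ?_, ?_⟩
  · rw [matAbs_sq, matAbs_sq, key, keyD]
  · rw [matAbs_sq, matAbs_sq, ← keyD]
  · exact sval_congr key

end
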